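/- Let G be a simple connected 3-regular graph whose adjacency matrix A is invertible. Then every column of A⁻¹ has at least 4 nonzero entries. -/
import Mathlib


open Finset in
/-- For a connected 3-regular graph with invertible adjacency matrix `A`, every column of
`A⁻¹` has at least 4 nonzero entries. -/
theorem stmt_13 {n : ℕ} (G : SimpleGraph (Fin n)) [DecidableRel G.Adj]
    (hconn : G.Connected) (hreg : G.IsRegularOfDegree 3)
    (hA : IsUnit (G.adjMatrix ℝ)) :
    ∀ v : Fin n, 4 ≤ (univ.filter fun u : Fin n => (G.adjMatrix ℝ)⁻¹ u v ≠ 0).card := by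
  intro v
  by_contra hlt
  push_neg at hlt
  set A : Matrix (Fin n) (Fin n) ℝ := G.adjMatrix ℝ with hAdef
  set c : Fin n → ℝ := fun u => A⁻¹ u v with hc
  set S : Finset (Fin n) := univ.filter (fun u : Fin n => c u ≠ 0) with hSdef
  have hScard : S.card ≤ 3 := Nat.lt_succ_iff.mp hlt
  have hmul : A * A⁻¹ = 1 :=
    Matrix.mul_nonsing_inv _ ((Matrix.isUnit_iff_isUnit_det A).mp hA)
  have hrow : ∀ u, ∑ x, A u x * c x = if u = v then 1 else 0 := by
    intro u
    have h := congrFun (congrFun hmul u) v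
    rw [Matrix.mul_apply] at h
    simpa [Matrix.one_apply, hc] using h
  have hrowS : ∀ u, ∑ x ∈ S, A u x * c x = if u = v then 1 else 0 := by
    intro u
    rw [← hrow u]
    apply Finset.sum_subset (Finset.subset_univ S)
    intro x _ hx
    have : c x = 0 := by
      by_contra hcx
      exact hx (by simp [hSdef, hcx])
    simp [this]
  have hzero_or_one : ∀ u w, A u w = 0 ∨ A u w = 1 :=
    fun u w => (G.isAdjMatrix_adjMatrix ℝ).zero_or_one u w
  have hadj_one : ∀ u w, G.Adj u w → A u w = 1 := by
    intro u w h
    simp [hAdef, SimpleGraph.adjMatrix_apply, h]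
  have hnadj_zero : ∀ u w, ¬ G.Adj u w → A u w = 0 := by
    intro u w h
    simp [hAdef, SimpleGraph.adjMatrix_apply, h]
  -- column sums equal 3
  have hcol : ∀ x, ∑ u, A u x = 3 := by
    intro x
    have h1 : ∑ u, A u x = ∑ u, A x u := by
      apply Finset.sum_congr rfl
      intro u _
      simp [hAdef, SimpleGraph.adjMatrix_apply, G.adj_comm]
    have h2 : ∑ u, A x u = ((Finset.univ.filter (G.Adj x)).card : ℝ) := by
      simp [hAdef, SimpleGraph.adjMatrix_apply]
    have h3 : (Finset.univ.filter (G.Adj x)).card = 3 := by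
      rw [← SimpleGraph.neighborFinset_eq_filter]
      exact hreg x
    rw [h1, h2, h3]
    norm_num
  -- global sum: sum of c over S is 1/3
  have hglob : ∑ x ∈ S, c x = 1 / 3 := by
    have h1 : ∑ u, ∑ x ∈ S, A u x * c x = 1 := by
      simp [hrowS]
    rw [Finset.sum_comm] at h1
    have h2 : ∀ x ∈ S, ∑ u, A u x * c x = 3 * c x := by
      intro x _
      rw [← Finset.sum_mul, hcol x]
    rw [Finset.sum_congr rfl h2, ← Finset.mul_sum] at h1
    linarith
  -- S is nonempty
  have hSne : S.Nonempty := by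
    by_contra h
    rw [Finset.not_nonempty_iff_eq_empty] at h
    have := hrowS v
    rw [h] at this
    simp at this
  -- every vertex has a neighbor different from v
  have hnb : ∀ w : Fin n, ∃ u, G.Adj u w ∧ u ≠ v := by
    intro w
    have hdeg : 1 < (G.neighborFinset w).card := by
      have h3 : G.degree w = 3 := hreg w
      rw [SimpleGraph.degree] at h3
      omega
    obtain ⟨u, hu, hne⟩ := Finset.exists_mem_ne hdeg v
    exact ⟨u, ((G.mem_neighborFinset w u).mp hu).symm, hne⟩
  have hmemS : ∀ w, w ∈ S → c w ≠ 0 := by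
    intro w hw
    exact (Finset.mem_filter.mp hw).2
  have hcard1 : 1 ≤ S.card := Finset.Nonempty.card_pos hSne
  obtain h | h | h : S.card = 1 ∨ S.card = 2 ∨ S.card = 3 := by omega
  · -- |S| = 1
    obtain ⟨w, hw⟩ := Finset.card_eq_one.mp h
    obtain ⟨u, hadj, hune⟩ := hnb w
    have heq := hrowS u
    rw [hw, Finset.sum_singleton, if_neg hune, hadj_one u w hadj] at heq
    have hcw : c w ≠ 0 := hmemS w (by rw [hw]; exact Finset.mem_singleton_self w)
    simp at heq
    exact hcw heq
  · -- |S| = 2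
    obtain ⟨w1, w2, h12, hw⟩ := Finset.card_eq_two.mp h
    have hc1 : c w1 ≠ 0 := hmemS w1 (by simp [hw])
    have hc2 : c w2 ≠ 0 := hmemS w2 (by simp [hw])
    rw [hw, Finset.sum_pair h12] at hglob
    obtain ⟨u, hadj, hune⟩ := hnb w1
    have heq := hrowS u
    rw [hw, Finset.sum_pair h12, if_neg hune, hadj_one u w1 hadj] at heq
    rcases hzero_or_one u w2 with h0 | h1
    · rw [h0] at heq
      simp at heq
      exact hc1 heq
    · rw [h1] at heq
      simp at heq
      linarith
  · -- |S| = 3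
    obtain ⟨w1, w2, w3, h12, h13, h23, hw⟩ := Finset.card_eq_three.mp h
    have hc1 : c w1 ≠ 0 := hmemS w1 (by simp [hw])
    have hc2 : c w2 ≠ 0 := hmemS w2 (by simp [hw])
    have hc3 : c w3 ≠ 0 := hmemS w3 (by simp [hw])
    have hsum3 : ∀ f : Fin n → ℝ, ∑ x ∈ S, f x = f w1 + f w2 + f w3 := by
      intro f
      rw [hw]
      rw [Finset.sum_insert (by simp [h12, h13]), Finset.sum_insert (by simp [h23]),
        Finset.sum_singleton]
      ring
    rw [hsum3] at hglob
    -- the key pair constraints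
    have key : ∀ i j k : Fin n, i ≠ j → i ≠ k → c i ≠ 0 →
        (∀ f : Fin n → ℝ, ∑ x ∈ S, f x = f i + f j + f k) →
        c i + c j + c k = 1 / 3 →
        (c i + c j = 0 ∨ c i + c k = 0) := by
      intro i j k hij hik hci hsum hs
      obtain ⟨u, hadj, hune⟩ := hnb i
      have heq := hrowS u
      rw [hsum (fun x => A u x * c x), if_neg hune, hadj_one u i hadj] at heq
      rcases hzero_or_one u j with hj | hj <;> rcases hzero_or_one u k with hk | hk <;>
        rw [hj, hk] at heq
      · exact absurd (by linarith : c i = 0) hci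
      · exact Or.inr (by linarith)
      · exact Or.inl (by linarith)
      · exact absurd heq (by intro h'; linarith)
    have F1 : c w1 + c w2 = 0 ∨ c w1 + c w3 = 0 :=
      key w1 w2 w3 h12 h13 hc1 hsum3 (by linarith)
    have F2 : c w2 + c w1 = 0 ∨ c w2 + c w3 = 0 :=
      key w2 w1 w3 h12.symm h23 hc2 (fun f => by rw [hsum3]; ring) (by linarith)
    have F3 : c w3 + c w1 = 0 ∨ c w3 + c w2 = 0 :=
      key w3 w1 w2 h13.symm h23.symm hc3 (fun f => by rw [hsum3]; ring) (by linarith)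
    have hv := hrowS v
    rw [hsum3 (fun x => A v x * c x), if_pos rfl] at hv
    rcases hzero_or_one v w1 with ha1 | ha1 <;>
      rcases hzero_or_one v w2 with ha2 | ha2 <;>
      rcases hzero_or_one v w3 with ha3 | ha3 <;>
      rw [ha1, ha2, ha3] at hv <;>
      rcases F1 with f1 | f1 <;> rcases F2 with f2 | f2 <;> rcases F3 with f3 | f3 <;>
      linarith
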